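/- (Metric Yoneda lemma) Let X be a generalized metric space with distance d taking values in [0, ∞], and let x ∈ X. For every nonexpansive co-presheaf φ : X → [0, ∞], the distance in the function space from the representable co-presheaf y ↦ d(y, x) to φ equals φ(x); concretely, ⨆_{y ∈ X} (φ(y) ∸ d(y, x)) = φ(x), where ∸ is truncated subtraction in [0, ∞]. -/
import Mathlib

open ENNReal

/-- The metric Yoneda lemma for generalized metric spaces: for a generalized
metric `d : X → X → [0,∞]` (reflexive, satisfying the triangle inequality) and
any nonexpansive co-presheaf `φ : X → [0,∞]`, the function-space distance from
the representable co-presheaf `y ↦ d y x` to `φ` equals `φ x`: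
`⨆ y, (φ y - d y x) = φ x`, where `-` is truncated subtraction in `[0,∞]`. -/
theorem metric_yoneda {X : Type*} (d : X → X → ℝ≥0∞)
    (hrefl : ∀ x : X, d x x = 0)
    (htri : ∀ x y z : X, d x z ≤ d x y + d y z)
    (x : X) (φ : X → ℝ≥0∞) (hφ : ∀ y z : X, φ z - φ y ≤ d z y) :
    ⨆ y : X, (φ y - d y x) = φ x := by
  apply le_antisymm
  · refine iSup_le fun y => ?_
    have := hφ x y
    exact tsub_le_iff_right.mpr (tsub_le_iff_left.mp this)
  · have : φ x - d x x ≤ ⨆ y : X, (φ y - d y x) := le_iSup (fun y => φ y - d y x) x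
    simpa [hrefl x] using this
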